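/- Let p be an odd prime, n a natural number with p ≤ n, and t the natural number with p^t ≤ n < p^(t+1). Then exp_p(A_n) = p^t. -/

import Mathlib

lemma pow_prime_dvd_multiset_lcm {p m : ℕ} (hp : p.Prime) (hm : 0 < m) :
    ∀ s : Multiset ℕ, p ^ m ∣ s.lcm → ∃ a ∈ s, p ^ m ∣ a := by
  intro s
  induction s using Multiset.induction with
  | empty =>
      intro h
      rw [Multiset.lcm_zero, Nat.dvd_one] at h
      exact absurd h (Nat.one_lt_pow hm.ne' hp.one_lt).ne'
  | cons a s ih =>
      intro h
      rw [Multiset.lcm_cons] at h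
      rcases eq_or_ne a 0 with rfl | ha
      · exact ⟨0, Multiset.mem_cons_self _ _, dvd_zero _⟩
      rcases eq_or_ne s.lcm 0 with h0 | hb
      · obtain ⟨b, hb, hd⟩ := ih (h0 ▸ dvd_zero _)
        exact ⟨b, Multiset.mem_cons_of_mem hb, hd⟩
      have hlcm : lcm a s.lcm ≠ 0 := by rw [lcm_eq_nat_lcm]; exact Nat.lcm_ne_zero ha hb
      rw [hp.pow_dvd_iff_le_factorization hlcm, lcm_eq_nat_lcm,
        Nat.factorization_lcm ha hb, Finsupp.sup_apply, le_sup_iff] at h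
      rcases h with h | h
      · exact ⟨a, Multiset.mem_cons_self _ _,
          (hp.pow_dvd_iff_le_factorization ha).2 h⟩
      · obtain ⟨b, hbm, hd⟩ := ih ((hp.pow_dvd_iff_le_factorization hb).2 h)
        exact ⟨b, Multiset.mem_cons_of_mem hbm, hd⟩

/-- For an odd prime `p ≤ n`, with `p^t ≤ n < p^(t+1)`, the `p`-part of the exponent
of the alternating group `A_n` is `p^t`. -/
theorem exponent_p_part_alternatingGroup (p n t : ℕ) (hp : p.Prime) (hodd : Odd p)
    (hpn : p ≤ n) (ht1 : p ^ t ≤ n) (ht2 : n < p ^ (t + 1)) :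
    p ^ t ∣ Monoid.exponent (alternatingGroup (Fin n)) ∧
      ¬ p ^ (t + 1) ∣ Monoid.exponent (alternatingGroup (Fin n)) := by
  constructor
  · -- divisibility: a `p^t`-cycle lies in `A_n` and has order `p^t`
    rcases Nat.eq_zero_or_pos t with rfl | ht
    · simpa using one_dvd _
    have h2 : 2 ≤ p ^ t := hp.two_le.trans (Nat.le_self_pow ht.ne' p)
    set e : Equiv.Perm (Fin (p ^ t)) := finRotate (p ^ t) with he
    set f : Fin (p ^ t) ↪ Fin n := (Fin.castLEEmb ht1) with hf
    set σ : Equiv.Perm (Fin n) := e.viaFintypeEmbedding f with hσ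
    have horder_e : orderOf e = p ^ t := by
      rw [← Equiv.Perm.lcm_cycleType, cycleType_finRotate_of_le h2]
      simp
    have horder : orderOf σ = p ^ t := by
      rw [hσ, Equiv.Perm.viaFintypeEmbedding]
      rw [show e.extendDomain f.toEquivRange
            = Equiv.Perm.extendDomainHom f.toEquivRange e from rfl,
        orderOf_injective _ (Equiv.Perm.extendDomainHom_injective f.toEquivRange) e,
        horder_e]
    have hsign : Equiv.Perm.sign σ = 1 := by
      rw [hσ, Equiv.Perm.viaFintypeEmbedding_sign]
      obtain ⟨m, hm⟩ : ∃ m, p ^ t = m + 1 :=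
        ⟨p ^ t - 1, (Nat.succ_pred_eq_of_pos (by omega)).symm⟩
      have hmeven : Even m := by
        have : Odd (p ^ t) := hodd.pow
        rw [hm] at this
        simpa using Nat.Odd.sub_odd this odd_one
      rw [he, hm, sign_finRotate, Nat.add_sub_cancel, hmeven.neg_one_pow]
    have hmem : σ ∈ alternatingGroup (Fin n) := Equiv.Perm.mem_alternatingGroup.2 hsign
    have hco : orderOf ((alternatingGroup (Fin n)).subtype ⟨σ, hmem⟩)
        = orderOf (⟨σ, hmem⟩ : alternatingGroup (Fin n)) :=
      orderOf_injective (alternatingGroup (Fin n)).subtype Subtype.coe_injective _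
    have : orderOf (⟨σ, hmem⟩ : alternatingGroup (Fin n)) = p ^ t := by
      rw [← horder, ← hco]; rfl
    rw [← this]
    exact Monoid.order_dvd_exponent _
  · -- non-divisibility
    intro hdvd
    have hexp0 : Monoid.exponent (alternatingGroup (Fin n)) ≠ 0 :=
      Monoid.exponent_ne_zero_of_finite
    obtain ⟨g, hg⟩ := hp.exists_orderOf_eq_pow_factorization_exponent
      (alternatingGroup (Fin n))
    set k := (Monoid.exponent (alternatingGroup (Fin n))).factorization p with hk
    have htk : t + 1 ≤ k := (hp.pow_dvd_iff_le_factorization hexp0).1 hdvd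
    set σ : Equiv.Perm (Fin n) := (g : Equiv.Perm (Fin n)) with hσ
    have hco : orderOf ((alternatingGroup (Fin n)).subtype g) = orderOf g :=
      orderOf_injective (alternatingGroup (Fin n)).subtype Subtype.coe_injective _
    have horder : orderOf σ = p ^ k := by
      rw [← hg, ← hco]; rfl
    have hdvd' : p ^ (t + 1) ∣ σ.cycleType.lcm := by
      rw [Equiv.Perm.lcm_cycleType, horder]
      exact pow_dvd_pow p htk
    obtain ⟨a, ha, hda⟩ := pow_prime_dvd_multiset_lcm hp (Nat.succ_pos t) _ hdvd'
    have ha2 : 2 ≤ a := Equiv.Perm.two_le_of_mem_cycleType ha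
    have h1 : p ^ (t + 1) ≤ a := Nat.le_of_dvd (by omega) hda
    have h2 : a ≤ n := by
      calc a ≤ σ.support.card := Equiv.Perm.le_card_support_of_mem_cycleType ha
        _ ≤ Fintype.card (Fin n) := Finset.card_le_univ _
        _ = n := Fintype.card_fin n
    omega
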